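/- Let ℓ be an odd prime. The set of indices [GL₂(ℤ/ℓℤ) : G] over subgroups G of GL₂(ℤ/ℓℤ) that belong to the nonsplit Cartan C_ns(ℓ) equals the set of positive integers divisible by ℓ(ℓ−1) and dividing an element of {ℓ(ℓ+1)(ℓ−1)²/q : q an odd prime dividing ℓ+1} ∪ {ℓ(ℓ+1)(ℓ−1)²/2^{ν₂(ℓ−1)+1}}, where ν₂ denotes the 2-adic valuation. -/

import Mathlib

open Matrix

abbrev GL2 (ℓ : ℕ) : Type := GL (Fin 2) (ZMod ℓ)

namespace Paper

/-- The underlying matrix of an element of `GL₂(ℤ/ℓℤ)`. -/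
def mat {ℓ : ℕ} (g : GL2 ℓ) : Matrix (Fin 2) (Fin 2) (ZMod ℓ) := ↑g

/-- The set of scalar matrices `Z(ℓ)`. -/
def ZSet (ℓ : ℕ) : Set (GL2 ℓ) :=
  { g | ∃ x : ZMod ℓ, mat g = x • (1 : Matrix (Fin 2) (Fin 2) (ZMod ℓ)) }

/-- The split Cartan `C_s(ℓ)`: invertible diagonal matrices. -/
def CsSet (ℓ : ℕ) : Set (GL2 ℓ) := { g | mat g 0 1 = 0 ∧ mat g 1 0 = 0 }

/-- The normalizer `N_s(ℓ)` of the split Cartan: diagonal and antidiagonal matrices. -/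
def NsSet (ℓ : ℕ) : Set (GL2 ℓ) :=
  CsSet ℓ ∪ { g | mat g 0 0 = 0 ∧ mat g 1 1 = 0 }

/-- The nonsplit Cartan `C_ns(ℓ)` relative to the nonsquare `ε`. -/
def CnsSet (ℓ : ℕ) (ε : ZMod ℓ) : Set (GL2 ℓ) :=
  { g | ∃ x y : ZMod ℓ, mat g = !![x, ε * y; y, x] }

/-- The normalizer `N_ns(ℓ)` of the nonsplit Cartan. -/
def NnsSet (ℓ : ℕ) (ε : ZMod ℓ) : Set (GL2 ℓ) :=
  CnsSet ℓ ε ∪ { g | ∃ x y : ZMod ℓ, mat g = !![x, -(ε * y); y, -x] }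

/-- The ramified Cartan `C_r(ℓ)`. -/
def CrSet (ℓ : ℕ) : Set (GL2 ℓ) :=
  { g | mat g 1 0 = 0 ∧ mat g 0 0 = mat g 1 1 }

/-- The Borel subgroup `B(ℓ)`: upper triangular matrices. -/
def BorelSet (ℓ : ℕ) : Set (GL2 ℓ) := { g | mat g 1 0 = 0 }

/-- `G` is conjugate in `GL₂(ℤ/ℓℤ)` to a subgroup of the set `M`. -/
def ConjSub {ℓ : ℕ} (G : Subgroup (GL2 ℓ)) (M : Set (GL2 ℓ)) : Prop :=
  ∃ a : GL2 ℓ, ∀ g ∈ G, a * g * a⁻¹ ∈ M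

/-- `G` belongs to `Z(ℓ)`. -/
def BelongsZ {ℓ : ℕ} (G : Subgroup (GL2 ℓ)) : Prop := ConjSub G (ZSet ℓ)

/-- `G` belongs to `C_s(ℓ)`. -/
def BelongsCs {ℓ : ℕ} (G : Subgroup (GL2 ℓ)) : Prop :=
  ConjSub G (CsSet ℓ) ∧ ¬ ConjSub G (ZSet ℓ)

/-- `G` belongs to `C_ns(ℓ)`. -/
def BelongsCns {ℓ : ℕ} (ε : ZMod ℓ) (G : Subgroup (GL2 ℓ)) : Prop :=
  ConjSub G (CnsSet ℓ ε) ∧ ¬ ConjSub G (ZSet ℓ)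

/-- `G` belongs to `N_s(ℓ)`. -/
def BelongsNs {ℓ : ℕ} (G : Subgroup (GL2 ℓ)) : Prop :=
  ConjSub G (NsSet ℓ) ∧ ¬ ConjSub G (CsSet ℓ)

/-- `G` belongs to `N_ns(ℓ)`. -/
def BelongsNns {ℓ : ℕ} (ε : ZMod ℓ) (G : Subgroup (GL2 ℓ)) : Prop :=
  ConjSub G (NnsSet ℓ ε) ∧ ¬ ConjSub G (CnsSet ℓ ε)

/-- `G` belongs to the ramified Cartan `C_r(ℓ)`. -/
def BelongsCr {ℓ : ℕ} (G : Subgroup (GL2 ℓ)) : Prop :=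
  ConjSub G (CrSet ℓ) ∧ ¬ ConjSub G (ZSet ℓ)

/-- `H` is a twist of `G`: either `H = ⟨G, -I⟩`, or `H` is an index-2 subgroup of
`⟨G, -I⟩` not containing `-I`. -/
def TwistOf {ℓ : ℕ} (G H : Subgroup (GL2 ℓ)) : Prop :=
  H = G ⊔ Subgroup.closure {(-1 : GL2 ℓ)} ∨
    (H ≤ G ⊔ Subgroup.closure {(-1 : GL2 ℓ)} ∧
      H.relIndex (G ⊔ Subgroup.closure {(-1 : GL2 ℓ)}) = 2 ∧
      (-1 : GL2 ℓ) ∉ H)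

/-- `H` fixes a nonzero vector of `(ℤ/ℓℤ)²`. -/
def FixesVec {ℓ : ℕ} (H : Subgroup (GL2 ℓ)) : Prop :=
  ∃ v : Fin 2 → ZMod ℓ, v ≠ 0 ∧ ∀ h ∈ H, Matrix.mulVec (mat h) v = v

end Paper

namespace Paper

variable {ℓ : ℕ} {ε : ZMod ℓ}

lemma M_mul (x y x' y' : ZMod ℓ) :
    !![x, ε * y; y, x] * !![x', ε * y'; y', x'] =
      !![x*x' + ε*(y*y'), ε*(x*y' + y*x'); x*y' + y*x', x*x' + ε*(y*y')] := by
  rw [Matrix.mul_fin_two]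
  congr 1 <;> ring_nf

def Kring (ℓ : ℕ) (ε : ZMod ℓ) : Subring (Matrix (Fin 2) (Fin 2) (ZMod ℓ)) where
  carrier := {A | ∃ x y : ZMod ℓ, A = !![x, ε * y; y, x]}
  one_mem' := ⟨1, 0, by ext i j; fin_cases i <;> fin_cases j <;> simp⟩
  zero_mem' := ⟨0, 0, by ext i j; fin_cases i <;> fin_cases j <;> simp⟩
  mul_mem' := by
    rintro A B ⟨x, y, rfl⟩ ⟨x', y', rfl⟩
    exact ⟨x*x' + ε*(y*y'), x*y' + y*x', M_mul x y x' y'⟩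
  add_mem' := by
    rintro A B ⟨x, y, rfl⟩ ⟨x', y', rfl⟩
    refine ⟨x + x', y + y', ?_⟩
    ext i j
    fin_cases i <;> fin_cases j <;> simp <;> ring
  neg_mem' := by
    rintro A ⟨x, y, rfl⟩
    refine ⟨-x, -y, ?_⟩
    ext i j
    fin_cases i <;> fin_cases j <;> simp

lemma K_comm (a b : Kring ℓ ε) : a * b = b * a := by
  obtain ⟨A, x, y, rfl⟩ := a
  obtain ⟨B, x', y', rfl⟩ := b
  apply Subtype.ext
  show _ * _ = _ * _
  rw [M_mul, M_mul]
  congr 1 <;> ring_nf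

end Paper

namespace Paper2
open Paper

variable {ℓ : ℕ} [Fact ℓ.Prime] {ε : ZMod ℓ}

lemma det_ne (hε : ∀ t : ZMod ℓ, t ^ 2 ≠ ε) {x y : ZMod ℓ} (h : ¬(x = 0 ∧ y = 0)) :
    det !![x, ε * y; y, x] ≠ 0 := by
  rw [Matrix.det_fin_two_of]
  intro h0
  rcases eq_or_ne y 0 with hy | hy
  · subst hy
    simp only [mul_zero, sub_zero, mul_self_eq_zero] at h0
    exact h ⟨h0, rfl⟩
  · apply hε (x * y⁻¹)
    field_simp
    linear_combination h0

lemma rep_ne_zero (hε : ∀ t : ZMod ℓ, t ^ 2 ≠ ε) {x y : ZMod ℓ}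
    (h : (!![x, ε * y; y, x] : Matrix (Fin 2) (Fin 2) (ZMod ℓ)) ≠ 0) :
    ¬(x = 0 ∧ y = 0) := by
  rintro ⟨rfl, rfl⟩
  apply h
  ext i j
  fin_cases i <;> fin_cases j <;> simp

lemma K_noZero (hε : ∀ t : ZMod ℓ, t ^ 2 ≠ ε) (a b : Kring ℓ ε) (hab : a * b = 0) :
    a = 0 ∨ b = 0 := by
  by_contra hcon
  push_neg at hcon
  obtain ⟨ha, hb⟩ := hcon
  obtain ⟨A, x, y, rfl⟩ := a
  have hA0 : (!![x, ε * y; y, x] : Matrix (Fin 2) (Fin 2) (ZMod ℓ)) ≠ 0 := by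
    intro h; exact ha (Subtype.ext h)
  have hdet : IsUnit (det !![x, ε * y; y, x]) :=
    (det_ne hε (rep_ne_zero hε hA0)).isUnit
  have hu : IsUnit (!![x, ε * y; y, x] : Matrix (Fin 2) (Fin 2) (ZMod ℓ)) :=
    (Matrix.isUnit_iff_isUnit_det _).2 hdet
  obtain ⟨u, hu⟩ := hu
  apply hb
  have h0 : (!![x, ε * y; y, x] : Matrix (Fin 2) (Fin 2) (ZMod ℓ)) * (b : Matrix (Fin 2) (Fin 2) (ZMod ℓ)) = 0 := by
    have := congrArg (Subtype.val) hab
    exact this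
  apply Subtype.ext
  show (b : Matrix (Fin 2) (Fin 2) (ZMod ℓ)) = 0
  calc (b : Matrix (Fin 2) (Fin 2) (ZMod ℓ)) = (↑u⁻¹ * ↑u) * b := by rw [Units.inv_mul, one_mul]
  _ = ↑u⁻¹ * (↑u * (b : Matrix (Fin 2) (Fin 2) (ZMod ℓ))) := by rw [mul_assoc]
  _ = 0 := by rw [hu, h0, mul_zero]

/-- the representation is unique -/
lemma rep_unique {x y x' y' : ZMod ℓ}
    (h : (!![x, ε * y; y, x] : Matrix (Fin 2) (Fin 2) (ZMod ℓ)) = !![x', ε * y'; y', x']) :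
    x = x' ∧ y = y' := by
  constructor
  · have := congrFun (congrFun h 0) 0; simpa using this
  · have := congrFun (congrFun h 1) 0; simpa using this

noncomputable def Kequiv : Kring ℓ ε ≃ (ZMod ℓ × ZMod ℓ) := by
  apply Equiv.ofBijective (fun a : Kring ℓ ε => ((a : Matrix (Fin 2) (Fin 2) (ZMod ℓ)) 0 0,
    (a : Matrix (Fin 2) (Fin 2) (ZMod ℓ)) 1 0))
  constructor
  · rintro ⟨A, x, y, rfl⟩ ⟨B, x', y', rfl⟩ hab
    simp only [Prod.mk.injEq] at hab
    apply Subtype.ext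
    show !![x, ε * y; y, x] = !![x', ε * y'; y', x']
    have h1 : x = x' := by simpa using hab.1
    have h2 : y = y' := by simpa using hab.2
    rw [h1, h2]
  · rintro ⟨x, y⟩
    exact ⟨⟨!![x, ε * y; y, x], x, y, rfl⟩, by simp⟩

lemma K_card : Nat.card (Kring ℓ ε) = ℓ ^ 2 := by
  rw [Nat.card_congr (Kequiv (ℓ := ℓ) (ε := ε))]
  simp [Nat.card_eq_fintype_card, ZMod.card, sq]

end Paper2

namespace Paper3
open Paper Paper2

variable {ℓ : ℕ} {ε : ZMod ℓ}

lemma mat_mul (a b : GL2 ℓ) : mat (a * b) = mat a * mat b := rfl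
lemma mat_one : mat (1 : GL2 ℓ) = 1 := rfl
lemma mat_pow (a : GL2 ℓ) (n : ℕ) : mat (a ^ n) = (mat a) ^ n := by
  induction n with
  | zero => rfl
  | succ n ih => rw [pow_succ, pow_succ, ← ih]; rfl

def Cns (ℓ : ℕ) (ε : ZMod ℓ) : Subgroup (GL2 ℓ) where
  carrier := CnsSet ℓ ε
  one_mem' := ⟨1, 0, by rw [mat_one, Matrix.one_fin_two]; norm_num⟩
  mul_mem' := by
    rintro a b ⟨x, y, h⟩ ⟨x', y', h'⟩
    exact ⟨x*x' + ε*(y*y'), x*y' + y*x', by rw [mat_mul, h, h', M_mul]⟩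
  inv_mem' := by
    rintro g ⟨x, y, h⟩
    have hinv : mat g⁻¹ = (mat g)⁻¹ := Matrix.coe_units_inv g
    set c : ZMod ℓ := Ring.inverse (det (mat g)) with hc
    refine ⟨c * x, -(c * y), ?_⟩
    rw [hinv, Matrix.inv_def, ← hc]
    rw [h, Matrix.adjugate_fin_two]
    ext i j
    fin_cases i <;> fin_cases j <;> simp [Matrix.smul_apply] <;> ring

lemma mem_Cns_iff {g : GL2 ℓ} : g ∈ Cns ℓ ε ↔ g ∈ CnsSet ℓ ε := Iff.rfl

variable [Fact ℓ.Prime]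

noncomputable def φK : (Kring ℓ ε)ˣ →* GL2 ℓ :=
  Units.map ((Kring ℓ ε).subtype : Kring ℓ ε →* Matrix (Fin 2) (Fin 2) (ZMod ℓ))

lemma φK_inj : Function.Injective (φK (ℓ := ℓ) (ε := ε)) :=
  Units.map_injective (fun a b h => Subtype.ext h)

lemma φK_range : (φK (ℓ := ℓ) (ε := ε)).range = Cns ℓ ε := by
  ext g
  constructor
  · rintro ⟨u, rfl⟩
    obtain ⟨x, y, hxy⟩ := (u : Kring ℓ ε).2
    exact ⟨x, y, hxy⟩
  · intro hg
    have h1 : mat g ∈ Kring ℓ ε := hg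
    have h2 : mat g⁻¹ ∈ Kring ℓ ε := (Cns ℓ ε).inv_mem hg
    refine ⟨⟨⟨mat g, h1⟩, ⟨mat g⁻¹, h2⟩, ?_, ?_⟩, ?_⟩
    · apply Subtype.ext
      show mat g * mat g⁻¹ = 1
      rw [← mat_mul, mul_inv_cancel, mat_one]
    · apply Subtype.ext
      show mat g⁻¹ * mat g = 1
      rw [← mat_mul, inv_mul_cancel, mat_one]
    · exact Units.ext rfl

end Paper3

namespace Paper4
open Paper Paper2 Paper3

section
variable {ℓ : ℕ} {ε : ZMod ℓ}

@[reducible] noncomputable def KCommRing (ℓ : ℕ) (ε : ZMod ℓ) : CommRing (Kring ℓ ε) :=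
  { (inferInstance : Ring (Kring ℓ ε)) with mul_comm := K_comm }

lemma scalar_mem (x : ZMod ℓ) : (x • 1 : Matrix (Fin 2) (Fin 2) (ZMod ℓ)) ∈ Kring ℓ ε :=
  ⟨x, 0, by ext i j; fin_cases i <;> fin_cases j <;> simp [Matrix.smul_apply, Matrix.one_apply]⟩

/-- scalar embedding as a monoid hom -/
def ρ (ℓ : ℕ) (ε : ZMod ℓ) : ZMod ℓ →* Kring ℓ ε where
  toFun x := ⟨x • 1, scalar_mem x⟩
  map_one' := by apply Subtype.ext; show (1 : ZMod ℓ) • 1 = 1; rw [one_smul]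
  map_mul' x y := by
    apply Subtype.ext
    show (x * y) • (1 : Matrix (Fin 2) (Fin 2) (ZMod ℓ)) = (x • 1) * (y • 1)
    rw [smul_mul_smul_comm, one_mul]

lemma ρ_inj : Function.Injective (ρ ℓ ε) := by
  intro x y h
  have := congrArg (fun a : Kring ℓ ε => (a : Matrix (Fin 2) (Fin 2) (ZMod ℓ)) 0 0) h
  simpa [ρ, Matrix.smul_apply, Matrix.one_apply] using this

end

section
variable {ℓ : ℕ} [Fact ℓ.Prime] {ε : ZMod ℓ}

lemma ell_pos : 0 < ℓ := (Fact.out : ℓ.Prime).pos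

lemma K_finite : Finite (Kring ℓ ε) := by
  haveI : NeZero ℓ := ⟨(Fact.out : ℓ.Prime).ne_zero⟩
  infer_instance

lemma K_isDomain (hε : ∀ t : ZMod ℓ, t ^ 2 ≠ ε) : IsDomain (Kring ℓ ε) := by
  letI := KCommRing ℓ ε
  haveI : Nontrivial (Kring ℓ ε) := by
    refine ⟨0, 1, fun h => ?_⟩
    have := congrArg (fun a : Kring ℓ ε => (a : Matrix (Fin 2) (Fin 2) (ZMod ℓ)) 0 0) h
    simp [Matrix.one_apply] at this
  haveI : NoZeroDivisors (Kring ℓ ε) := ⟨fun {a b} h => K_noZero hε a b h⟩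
  exact NoZeroDivisors.to_isDomain _

lemma natid : ℓ ^ 2 - 1 = (ℓ + 1) * (ℓ - 1) := by
  have hp : 0 < ℓ := ell_pos
  obtain ⟨k, rfl⟩ : ∃ k, ℓ = k + 1 := ⟨ℓ - 1, by omega⟩
  have h : (k+1)^2 = k*k+2*k+1 := by ring
  have h2 : (k + 1 + 1) * (k + 1 - 1) = k*k + 2*k := by rw [Nat.add_sub_cancel]; ring
  omega

end
end Paper4

namespace Paper5
open Paper Paper2 Paper3 Paper4

variable {ℓ : ℕ} [Fact ℓ.Prime] {ε : ZMod ℓ}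

lemma card_Kunits (hε : ∀ t : ZMod ℓ, t ^ 2 ≠ ε) :
    Nat.card (Kring ℓ ε)ˣ = ℓ ^ 2 - 1 := by
  haveI := K_finite (ℓ := ℓ) (ε := ε)
  letI := KCommRing ℓ ε
  haveI := K_isDomain hε
  letI : DecidableEq (Kring ℓ ε) := Classical.decEq _
  letI : Fintype (Kring ℓ ε) := Fintype.ofFinite _
  letI : Field (Kring ℓ ε) := Fintype.fieldOfDomain _
  rw [Nat.card_units, K_card]

lemma card_Cns (hε : ∀ t : ZMod ℓ, t ^ 2 ≠ ε) :
    Nat.card (Cns ℓ ε) = ℓ ^ 2 - 1 := by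
  have e : (Kring ℓ ε)ˣ ≃* (φK (ℓ := ℓ) (ε := ε)).range := MonoidHom.ofInjective φK_inj
  rw [← φK_range, ← Nat.card_congr e.toEquiv, card_Kunits hε]

def cns_to_K : (Cns ℓ ε) →* Kring ℓ ε where
  toFun g := ⟨mat g.val, g.2⟩
  map_one' := Subtype.ext mat_one
  map_mul' a b := Subtype.ext (mat_mul _ _)

lemma GL2_finite : Finite (GL2 ℓ) := by
  haveI : NeZero ℓ := ⟨(Fact.out : ℓ.Prime).ne_zero⟩
  infer_instance

lemma isCyclic_Cns (hε : ∀ t : ZMod ℓ, t ^ 2 ≠ ε) : IsCyclic (Cns ℓ ε) := by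
  haveI := GL2_finite (ℓ := ℓ)
  letI := KCommRing ℓ ε
  haveI := K_isDomain hε
  exact isCyclic_of_subgroup_isDomain (cns_to_K (ℓ := ℓ) (ε := ε))
    (fun a b h => Subtype.ext (Units.ext (congrArg Subtype.val h)))

lemma mat_ne_zero (g : GL2 ℓ) : mat g ≠ 0 := by
  haveI : Fact (1 < ℓ) := ⟨(Fact.out : ℓ.Prime).one_lt⟩
  intro h
  have h2 : mat g * mat g⁻¹ = 1 := by rw [← mat_mul, mul_inv_cancel, mat_one]
  rw [h, zero_mul] at h2
  have := congrFun (congrFun h2 0) 0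
  simp [Matrix.one_apply] at this

lemma ZSet_pow {g : GL2 ℓ} (hg : ∃ x : ZMod ℓ, mat g = x • 1) : g ^ (ℓ - 1) = 1 := by
  obtain ⟨x, hx⟩ := hg
  have hx0 : x ≠ 0 := by
    rintro rfl
    rw [zero_smul] at hx
    exact mat_ne_zero g hx
  apply Units.ext
  show mat (g ^ (ℓ - 1)) = 1
  rw [mat_pow, hx, smul_pow, one_pow, ZMod.pow_card_sub_one_eq_one hx0, one_smul]
end Paper5

namespace Paper6
open Paper Paper2 Paper3 Paper4 Paper5

variable {ℓ : ℕ} [Fact ℓ.Prime] {ε : ZMod ℓ}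

lemma Cns_pow_scalar (hε : ∀ t : ZMod ℓ, t ^ 2 ≠ ε) {g : GL2 ℓ} (hg : g ∈ Cns ℓ ε)
    (h1 : g ^ (ℓ - 1) = 1) : ∃ x : ZMod ℓ, mat g = x • 1 := by
  classical
  haveI := K_finite (ℓ := ℓ) (ε := ε)
  letI := KCommRing ℓ ε
  haveI := K_isDomain hε
  haveI : IsCyclic (Kring ℓ ε)ˣ := isCyclic_of_subgroup_isDomain (Units.coeHom _) (fun _ _ h => Units.ext h)
  obtain ⟨ζ, hζ⟩ := IsCyclic.exists_generator (α := (Kring ℓ ε)ˣ)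
  have hord : orderOf ζ = ℓ ^ 2 - 1 := by
    rw [orderOf_eq_card_of_forall_mem_zpowers hζ, card_Kunits hε]
  have hgr : g ∈ (φK (ℓ := ℓ) (ε := ε)).range := by rw [φK_range]; exact hg
  obtain ⟨u, hu⟩ := hgr
  have hu1 : u ^ (ℓ - 1) = 1 := φK_inj (by rw [map_pow, hu, h1, _root_.map_one])
  have hl1 : 0 < ℓ - 1 := by have := (Fact.out : ℓ.Prime).two_le; omega
  have claimA : ∀ v : (Kring ℓ ε)ˣ, v ^ (ℓ - 1) = 1 → v ∈ Subgroup.zpowers (ζ ^ (ℓ + 1)) := by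
    intro v hv
    obtain ⟨k, hk⟩ := Subgroup.mem_zpowers_iff.1 (hζ v)
    have hz : ζ ^ (k * ((ℓ - 1 : ℕ) : ℤ)) = 1 := by
      rw [_root_.zpow_mul, hk, zpow_natCast, hv]
    have hdvd : ((ℓ ^ 2 - 1 : ℕ) : ℤ) ∣ k * ((ℓ - 1 : ℕ) : ℤ) := by
      rw [← hord]; exact orderOf_dvd_iff_zpow_eq_one.2 hz
    rw [natid, Nat.cast_mul] at hdvd
    have hA : ((ℓ - 1 : ℕ) : ℤ) ≠ 0 := by positivity
    have hdvd2 : ((ℓ + 1 : ℕ) : ℤ) ∣ k := by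
      have h' : ((ℓ + 1 : ℕ) : ℤ) * ((ℓ - 1 : ℕ) : ℤ) ∣ k * ((ℓ - 1 : ℕ) : ℤ) := hdvd
      exact (mul_dvd_mul_iff_right hA).1 h'
    obtain ⟨j, rfl⟩ := hdvd2
    refine Subgroup.mem_zpowers_iff.2 ⟨j, ?_⟩
    rw [← hk, ← zpow_natCast ζ (ℓ + 1), ← _root_.zpow_mul]
  -- the subgroup of (ℓ-1)-th roots of unity
  set H := Subgroup.zpowers (ζ ^ (ℓ + 1)) with hH
  have hcardH : Nat.card H = ℓ - 1 := by
    rw [hH, Nat.card_zpowers, orderOf_pow, hord, Nat.gcd_eq_right, natid,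
      Nat.mul_div_cancel_left _ (by omega : 0 < ℓ + 1)]
    rw [natid]; exact Dvd.intro _ rfl
  set s : (ZMod ℓ)ˣ →* (Kring ℓ ε)ˣ := Units.map (ρ ℓ ε) with hs
  have hsinj : Function.Injective s := Units.map_injective ρ_inj
  have hsmem : ∀ x : (ZMod ℓ)ˣ, s x ∈ H := by
    intro x
    apply claimA
    rw [← map_pow, ZMod.units_pow_card_sub_one_eq_one, _root_.map_one]
  set f : (ZMod ℓ)ˣ → H := fun x => ⟨s x, hsmem x⟩ with hf
  have hfinj : Function.Injective f := by
    intro a b h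
    exact hsinj (congrArg Subtype.val h)
  have hcard2 : Nat.card (ZMod ℓ)ˣ = Nat.card H := by
    rw [hcardH, Nat.card_eq_fintype_card, ZMod.card_units]
  have hfsurj : Function.Surjective f := by
    haveI : Finite H := by
      haveI : NeZero ℓ := ⟨(Fact.out : ℓ.Prime).ne_zero⟩
      infer_instance
    exact ((Nat.bijective_iff_injective_and_card f).2 ⟨hfinj, hcard2⟩).2
  obtain ⟨x, hx⟩ := hfsurj ⟨u, claimA u hu1⟩
  refine ⟨(x : ZMod ℓ), ?_⟩
  have hux : s x = u := congrArg Subtype.val hx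
  have : ((u : Kring ℓ ε) : Matrix (Fin 2) (Fin 2) (ZMod ℓ)) = (x : ZMod ℓ) • 1 := by
    rw [← hux]; rfl
  rw [← hu]
  exact this

end Paper6

namespace PaperNT

variable {ℓ : ℕ}

lemma NT1 (hℓ : ℓ.Prime) : (ℓ ^ 2 - 1) * (ℓ ^ 2 - ℓ) = ℓ * (ℓ + 1) * (ℓ - 1) ^ 2 := by
  have h2 : 2 ≤ ℓ := hℓ.two_le
  obtain ⟨k, rfl⟩ : ∃ k, ℓ = k + 1 := ⟨ℓ - 1, by omega⟩
  have e1 : (k+1)^2 = k*k+2*k+1 := by ring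
  have e2 : (k+1)^2 - 1 = k*k + 2*k := by omega
  have e3 : (k+1)^2 - (k+1) = k*k + k := by omega
  rw [e2, e3]
  have e4 : (k+1+1) = k + 2 := by ring
  have e5 : (k+1-1) = k := by omega
  rw [e4, e5]
  ring

lemma NT1' (hℓ : ℓ.Prime) : (ℓ ^ 2 - 1) * (ℓ ^ 2 - ℓ) = (ℓ * (ℓ - 1)) * (ℓ ^ 2 - 1) := by
  have h2 : 2 ≤ ℓ := hℓ.two_le
  obtain ⟨k, rfl⟩ : ∃ k, ℓ = k + 1 := ⟨ℓ - 1, by omega⟩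
  have e1 : (k+1)^2 = k*k+2*k+1 := by ring
  have e2 : (k+1)^2 - 1 = k*k + 2*k := by omega
  have e3 : (k+1)^2 - (k+1) = k*k + k := by omega
  rw [e2, e3]
  have e5 : (k+1-1) = k := by omega
  rw [e5]
  ring

lemma NT_sq_sub (hℓ : ℓ.Prime) : ℓ ^ 2 - 1 = (ℓ + 1) * (ℓ - 1) := by
  have h2 : 2 ≤ ℓ := hℓ.two_le
  obtain ⟨k, rfl⟩ : ∃ k, ℓ = k + 1 := ⟨ℓ - 1, by omega⟩
  have e1 : (k+1)^2 = k*k+2*k+1 := by ring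
  have e5 : (k+1-1) = k := by omega
  rw [e5]
  have : (k+1+1)*k = k*k+2*k := by ring
  omega

lemma NT3 (hℓ : ℓ.Prime) {q : ℕ} (hq : q.Prime) (hqodd : Odd q) (hql : q ∣ ℓ + 1) :
    ¬ q ∣ ℓ - 1 := by
  intro hd
  have h2 : 2 ≤ ℓ := hℓ.two_le
  have : q ∣ (ℓ + 1) - (ℓ - 1) := Nat.dvd_sub hql hd
  have h22 : (ℓ + 1) - (ℓ - 1) = 2 := by omega
  rw [h22] at this
  have hq2 : q = 2 := (Nat.prime_dvd_prime_iff_eq hq Nat.prime_two).1 this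
  rw [hq2] at hqodd
  exact (by decide : ¬ Odd 2) hqodd

lemma NT4 (hℓ : ℓ.Prime) (h3 : 2 < ℓ) : ¬ (2 ^ (padicValNat 2 (ℓ - 1) + 1) ∣ ℓ - 1) := by
  have hne : ℓ - 1 ≠ 0 := by omega
  intro h
  have := (Nat.Prime.pow_dvd_iff_le_factorization Nat.prime_two hne).1 h
  rw [Nat.factorization_def _ Nat.prime_two] at this
  omega

lemma NT5 (hℓ : ℓ.Prime) (hodd : Odd ℓ) : 2 ^ (padicValNat 2 (ℓ - 1) + 1) ∣ ℓ ^ 2 - 1 := by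
  have h2 : 2 ≤ ℓ := hℓ.two_le
  rw [NT_sq_sub hℓ, pow_succ]
  have ha : 2 ^ (padicValNat 2 (ℓ - 1)) ∣ ℓ - 1 := pow_padicValNat_dvd
  have hb : 2 ∣ ℓ + 1 := by
    obtain ⟨k, hk⟩ := hodd
    exact ⟨k + 1, by omega⟩
  calc 2 ^ (padicValNat 2 (ℓ - 1)) * 2 ∣ (ℓ - 1) * (ℓ + 1) := mul_dvd_mul ha hb
  _ = (ℓ + 1) * (ℓ - 1) := mul_comm _ _

lemma NT2 (hℓ : ℓ.Prime) (h3 : 2 < ℓ) {d : ℕ} (hd : d ∣ ℓ ^ 2 - 1) (hnd : ¬ d ∣ ℓ - 1) :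
    (∃ q : ℕ, q.Prime ∧ Odd q ∧ q ∣ ℓ + 1 ∧ q ∣ d) ∨ 2 ^ (padicValNat 2 (ℓ - 1) + 1) ∣ d := by
  by_contra hcon
  push_neg at hcon
  obtain ⟨h1, h2⟩ := hcon
  apply hnd
  have hsq : ℓ ^ 2 - 1 ≠ 0 := by
    have := hℓ.two_le
    have : 4 ≤ ℓ ^ 2 := by nlinarith
    omega
  have hd0 : d ≠ 0 := by rintro rfl; exact hsq (Nat.zero_dvd.1 hd)
  have hl1 : ℓ - 1 ≠ 0 := by omega
  rw [← Nat.factorization_le_iff_dvd hd0 hl1, Finsupp.le_def]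
  intro p
  by_cases hp : p.Prime
  · by_cases hpd : p ∣ d
    · rcases eq_or_ne p 2 with rfl | hne2
      · have hf2 : d.factorization 2 ≤ padicValNat 2 (ℓ - 1) := by
          by_contra hgt
          exact h2 ((Nat.Prime.pow_dvd_iff_le_factorization Nat.prime_two hd0).2 (by omega))
        rw [Nat.factorization_def _ Nat.prime_two]
        exact hf2
      · have hpl : ¬ p ∣ ℓ + 1 := fun h => h1 p hp (hp.odd_of_ne_two hne2) h hpd
        have hle : d.factorization p ≤ (ℓ ^ 2 - 1).factorization p :=
          (Nat.factorization_le_iff_dvd hd0 hsq).2 hd p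
        rw [NT_sq_sub hℓ, Nat.factorization_mul (by omega) hl1] at hle
        simpa [Nat.factorization_eq_zero_of_not_dvd hpl] using hle
    · simp [Nat.factorization_eq_zero_of_not_dvd hpd]
  · simp [Nat.factorization_eq_zero_of_not_prime _ hp]

end PaperNT

namespace Paper7
open Paper Paper2 Paper3 Paper4 Paper5 Paper6 PaperNT

variable {ℓ : ℕ} [Fact ℓ.Prime] {ε : ZMod ℓ}

lemma main_fwd (hε : ∀ t : ZMod ℓ, t ^ 2 ≠ ε) {G : Subgroup (GL2 ℓ)}
    (hc : ConjSub G (CnsSet ℓ ε)) (hz : ¬ ConjSub G (ZSet ℓ)) :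
    ∃ d, d ∣ ℓ ^ 2 - 1 ∧ ¬ d ∣ ℓ - 1 ∧ G.index * d = Nat.card (GL2 ℓ) := by
  haveI := GL2_finite (ℓ := ℓ)
  obtain ⟨a, ha⟩ := hc
  set e := MulAut.conj a with he
  set G' := G.map e.toMonoidHom with hG'def
  have hG' : G' ≤ Cns ℓ ε := by
    rintro x ⟨g, hg, rfl⟩
    exact ha g hg
  have hcard : Nat.card G = Nat.card G' :=
    Nat.card_congr (Subgroup.equivMapOfInjective G _ e.injective).toEquiv
  refine ⟨Nat.card G, ?_, ?_, Subgroup.index_mul_card G⟩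
  · rw [hcard, ← card_Cns (ℓ := ℓ) hε]
    exact Subgroup.card_dvd_of_le hG'
  · intro hdvd
    apply hz
    refine ⟨a, fun g hg => ?_⟩
    have hxmem : a * g * a⁻¹ ∈ G' := ⟨g, hg, rfl⟩
    have hpow : (a * g * a⁻¹) ^ Nat.card G' = 1 := by
      have h1 : (⟨a * g * a⁻¹, hxmem⟩ : G') ^ Nat.card G' = 1 := pow_card_eq_one'
      exact congrArg Subtype.val h1
    obtain ⟨k, hk⟩ := hdvd
    have hpow2 : (a * g * a⁻¹) ^ (ℓ - 1) = 1 := by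
      rw [hk, hcard, pow_mul, hpow, one_pow]
    exact Cns_pow_scalar hε (hG' hxmem) hpow2

lemma main_rev (hε : ∀ t : ZMod ℓ, t ^ 2 ≠ ε) {d : ℕ} (hd : d ∣ ℓ ^ 2 - 1)
    (hnd : ¬ d ∣ ℓ - 1) :
    ∃ G : Subgroup (GL2 ℓ), ConjSub G (CnsSet ℓ ε) ∧ ¬ ConjSub G (ZSet ℓ) ∧
      G.index * d = Nat.card (GL2 ℓ) := by
  haveI := GL2_finite (ℓ := ℓ)
  haveI := isCyclic_Cns (ℓ := ℓ) hε
  have hsq : ℓ ^ 2 - 1 ≠ 0 := by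
    have := (Fact.out : ℓ.Prime).two_le
    have : 4 ≤ ℓ ^ 2 := by nlinarith
    omega
  obtain ⟨ζ, hζ⟩ := IsCyclic.exists_generator (α := Cns ℓ ε)
  have hordζ : orderOf (ζ : GL2 ℓ) = ℓ ^ 2 - 1 := by
    rw [Subgroup.orderOf_coe, orderOf_eq_card_of_forall_mem_zpowers hζ, card_Cns hε]
  set h : GL2 ℓ := (ζ : GL2 ℓ) ^ ((ℓ ^ 2 - 1) / d) with hh
  have hordh : orderOf h = d := by
    rw [hh, orderOf_pow, hordζ, Nat.gcd_eq_right (Nat.div_dvd_of_dvd hd),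
      Nat.div_div_self hd hsq]
  have hmem : h ∈ Cns ℓ ε := (Cns ℓ ε).pow_mem ζ.2 _
  refine ⟨Subgroup.zpowers h, ⟨1, fun g hg => ?_⟩, ?_, ?_⟩
  · have : (1 : GL2 ℓ) * g * 1⁻¹ = g := by group
    rw [this]
    exact Subgroup.zpowers_le.2 hmem hg
  · rintro ⟨b, hb⟩
    have hbh := hb h (Subgroup.mem_zpowers h)
    have h4 : b * h ^ (ℓ - 1) * b⁻¹ = 1 := by rw [← conj_pow]; exact ZSet_pow hbh
    have h5 : h ^ (ℓ - 1) = 1 := by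
      have := congrArg (fun z => b⁻¹ * z * b) h4
      simpa [mul_assoc] using this
    exact hnd (hordh ▸ orderOf_dvd_of_pow_eq_one h5)
  · have hi := Subgroup.index_mul_card (Subgroup.zpowers h)
    rwa [Nat.card_zpowers, hordh] at hi

end Paper7



theorem statement_4 (ℓ : ℕ) (hℓ : Nat.Prime ℓ) (hodd : Odd ℓ) (ε : ZMod ℓ)
    (hε : ∀ t : ZMod ℓ, t ^ 2 ≠ ε) :
    { n : ℕ | ∃ G : Subgroup (GL2 ℓ), Paper.BelongsCns ε G ∧ G.index = n } =
      { n : ℕ | 0 < n ∧ ℓ * (ℓ - 1) ∣ n ∧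
        ∃ m : ℕ,
          ((∃ q : ℕ, q.Prime ∧ Odd q ∧ q ∣ (ℓ + 1) ∧ m = ℓ * (ℓ + 1) * (ℓ - 1) ^ 2 / q) ∨
            m = ℓ * (ℓ + 1) * (ℓ - 1) ^ 2 / 2 ^ (padicValNat 2 (ℓ - 1) + 1)) ∧ n ∣ m } := by
  haveI : Fact ℓ.Prime := ⟨hℓ⟩
  haveI := Paper5.GL2_finite (ℓ := ℓ)
  haveI : NeZero ℓ := ⟨hℓ.ne_zero⟩
  have h3 : 2 < ℓ := by
    obtain ⟨k, hk⟩ := hodd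
    have := hℓ.two_le
    omega
  have hsq : ℓ ^ 2 - 1 ≠ 0 := by
    have : 4 ≤ ℓ ^ 2 := by nlinarith
    omega
  have hNcard : Nat.card (GL2 ℓ) = (ℓ ^ 2 - 1) * (ℓ ^ 2 - ℓ) := by
    rw [Matrix.card_GL_field, Fin.prod_univ_two, ZMod.card]
    norm_num
  have hN0 : Nat.card (GL2 ℓ) ≠ 0 := by
    haveI : Nonempty (GL2 ℓ) := ⟨1⟩
    exact Nat.card_pos.ne'
  ext n
  simp only [Set.mem_setOf_eq]
  constructor
  · rintro ⟨G, ⟨hc, hz⟩, rfl⟩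
    obtain ⟨d, hd, hnd, hind⟩ := Paper7.main_fwd hε hc hz
    have hd0 : 0 < d := by
      rcases Nat.eq_zero_or_pos d with rfl | h
      · exact absurd (Nat.zero_dvd.1 hd) hsq
      · exact h
    refine ⟨?_, ?_, ?_⟩
    · rcases Nat.eq_zero_or_pos G.index with h0 | h
      · rw [h0, zero_mul] at hind
        exact absurd hind.symm hN0
      · exact h
    · obtain ⟨e, he⟩ := hd
      have heq : G.index * d = (ℓ * (ℓ - 1) * e) * d := by
        rw [hind, hNcard, PaperNT.NT1' hℓ, he]; ring
      have heq2 : G.index = ℓ * (ℓ - 1) * e := Nat.eq_of_mul_eq_mul_right hd0 heq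
      exact ⟨e, by rw [heq2]⟩
    · rcases PaperNT.NT2 hℓ h3 hd hnd with ⟨q, hq, hqo, hql, hqd⟩ | h2d
      · refine ⟨ℓ * (ℓ + 1) * (ℓ - 1) ^ 2 / q, Or.inl ⟨q, hq, hqo, hql, rfl⟩, ?_⟩
        obtain ⟨f, rfl⟩ := hqd
        have hNq : ℓ * (ℓ + 1) * (ℓ - 1) ^ 2 = G.index * f * q := by
          rw [← PaperNT.NT1 hℓ, ← hNcard, ← hind]; ring
        rw [hNq, Nat.mul_div_cancel _ hq.pos]
        exact dvd_mul_right _ _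
      · refine ⟨ℓ * (ℓ + 1) * (ℓ - 1) ^ 2 / 2 ^ (padicValNat 2 (ℓ - 1) + 1),
          Or.inr rfl, ?_⟩
        obtain ⟨f, rfl⟩ := h2d
        have hNq : ℓ * (ℓ + 1) * (ℓ - 1) ^ 2 =
            G.index * f * 2 ^ (padicValNat 2 (ℓ - 1) + 1) := by
          rw [← PaperNT.NT1 hℓ, ← hNcard, ← hind]; ring
        rw [hNq, Nat.mul_div_cancel _ (pow_pos (by norm_num) _)]
        exact dvd_mul_right _ _
  · rintro ⟨hn0, ⟨e, hne⟩, m, hm, hnm⟩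
    have hQ : ∃ Q, 0 < Q ∧ Q ∣ ℓ ^ 2 - 1 ∧ ¬ Q ∣ ℓ - 1 ∧
        m = ℓ * (ℓ + 1) * (ℓ - 1) ^ 2 / Q := by
      rcases hm with ⟨q, hq, hqo, hql, rfl⟩ | rfl
      · refine ⟨q, hq.pos, ?_, PaperNT.NT3 hℓ hq hqo hql, rfl⟩
        rw [PaperNT.NT_sq_sub hℓ]
        exact hql.trans (dvd_mul_right _ _)
      · exact ⟨2 ^ (padicValNat 2 (ℓ - 1) + 1), pow_pos (by norm_num) _,
          PaperNT.NT5 hℓ hodd, PaperNT.NT4 hℓ h3, rfl⟩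
    obtain ⟨Q, hQ0, hQdvd, hQnd, rfl⟩ := hQ
    have hQN : Q ∣ ℓ * (ℓ + 1) * (ℓ - 1) ^ 2 := by
      rw [← PaperNT.NT1 hℓ]
      exact hQdvd.trans (dvd_mul_right _ _)
    obtain ⟨k, hk⟩ := hnm
    have hNnk : ℓ * (ℓ + 1) * (ℓ - 1) ^ 2 = n * k * Q := by
      rw [← Nat.div_mul_cancel hQN, hk]
    have hNpos : 0 < ℓ * (ℓ + 1) * (ℓ - 1) ^ 2 := by
      have h1 : 0 < ℓ - 1 := by omega
      have h2 : 0 < ℓ := by omega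
      exact Nat.mul_pos (Nat.mul_pos h2 (by omega)) (pow_pos h1 2)
    have hk0 : 0 < k := by
      rcases Nat.eq_zero_or_pos k with rfl | h
      · rw [mul_zero, zero_mul] at hNnk; omega
      · exact h
    have hdd : k * Q ∣ ℓ ^ 2 - 1 := by
      refine ⟨e, ?_⟩
      have hcan : ℓ * (ℓ - 1) * (ℓ ^ 2 - 1) = ℓ * (ℓ - 1) * (k * Q * e) := by
        have h1 : (ℓ ^ 2 - 1) * (ℓ ^ 2 - ℓ) = ℓ * (ℓ + 1) * (ℓ - 1) ^ 2 := PaperNT.NT1 hℓ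
        rw [← PaperNT.NT1' hℓ, h1, hNnk, hne]; ring
      have hlp : 0 < ℓ * (ℓ - 1) := by
        have : 1 ≤ ℓ - 1 := by omega
        have : 0 < ℓ := by omega
        exact Nat.mul_pos ‹0 < ℓ› ‹1 ≤ ℓ - 1›
      exact Nat.eq_of_mul_eq_mul_left hlp hcan
    have hdnd : ¬ k * Q ∣ ℓ - 1 := fun h => hQnd ((dvd_mul_left Q k).trans h)
    obtain ⟨G, hc, hz, hind⟩ := Paper7.main_rev hε hdd hdnd
    refine ⟨G, ⟨hc, hz⟩, ?_⟩
    have hd0 : 0 < k * Q := Nat.mul_pos hk0 hQ0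
    have heq : G.index * (k * Q) = n * (k * Q) := by
      rw [hind, hNcard, PaperNT.NT1 hℓ, hNnk]; ring
    exact Nat.eq_of_mul_eq_mul_right hd0 heq
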